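/- Let V be a finite-dimensional real normed vector space and D ⊆ V a balanced cone spanning V. If f : B(x₀, 2r) → ℝ is D-convex, then f is Lipschitz on B(x₀, r) with Lipschitz constant at most (c₀/r)·osc(f, B(x₀,2r)), where c₀ depends only on the norm and the cone D, and osc denotes the oscillation sup f − inf f over the ball. -/

import Mathlib

open Set Metric

/-- D-convexity of a real-valued function on a set `S`: convexity along every
segment contained in `S` whose direction lies in `D`. -/
def DConvexOn {V : Type*} [NormedAddCommGroup V] [NormedSpace ℝ V]
    (D S : Set V) (f : V → ℝ) : Prop :=
  ∀ ⦃x y : V⦄, x ∈ S → y ∈ S → x - y ∈ D → segment ℝ x y ⊆ S →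
    ConvexOn ℝ (segment ℝ x y) f

/-- Key one-dimensional step: if `z, w` lie well inside the ball and `w - z ∈ D`,
then `f w - f z ≤ (2m/r) ‖w - z‖`. -/
lemma key_step {V : Type*} [NormedAddCommGroup V] [NormedSpace ℝ V]
    (D : Set V) (hDbal : ∀ (t : ℝ), ∀ x ∈ D, t • x ∈ D)
    (x₀ : V) (r : ℝ) (hr : 0 < r) (f : V → ℝ)
    (hf : DConvexOn D (ball x₀ (2 * r)) f) (m : ℝ) (hm0 : 0 ≤ m)
    (hm : ∀ u ∈ ball x₀ (2 * r), ∀ v ∈ ball x₀ (2 * r), f u - f v ≤ m)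
    (z w : V) (hz : z ∈ ball x₀ (3/2 * r)) (hw : w ∈ ball x₀ (3/2 * r))
    (hd : w - z ∈ D) : f w - f z ≤ 2 * m / r * ‖w - z‖ := by
  by_cases hwz : w = z
  · subst hwz; simp
  set u := w - z with hu_def
  have hu : 0 < ‖u‖ := by simpa [hu_def, sub_eq_zero] using hwz
  set t : ℝ := r / (2 * ‖u‖) with ht_def
  have ht : 0 < t := by positivity
  set w' : V := w + t • u with hw'_def
  have hzball : z ∈ ball x₀ (2 * r) := by
    rw [mem_ball] at hz ⊢; linarith
  have hwball : w ∈ ball x₀ (2 * r) := by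
    rw [mem_ball] at hw ⊢; linarith
  have hw'ball : w' ∈ ball x₀ (2 * r) := by
    rw [mem_ball] at hw ⊢
    have h1 : dist w' w = r / 2 := by
      rw [hw'_def, dist_self_add_left, norm_smul, Real.norm_eq_abs, abs_of_pos ht, ht_def]
      field_simp
    calc dist w' x₀ ≤ dist w' w + dist w x₀ := dist_triangle _ _ _
      _ < r / 2 + 3/2 * r := by linarith
      _ = 2 * r := by ring
  have hdir : w' - z ∈ D := by
    have : w' - z = (1 + t) • u := by
      rw [hw'_def]; module
    rw [this]; exact hDbal _ _ hd
  have hseg : segment ℝ w' z ⊆ ball x₀ (2 * r) :=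
    (convex_ball x₀ (2 * r)).segment_subset hw'ball hzball
  have hconv := hf hw'ball hzball hdir hseg
  set s' : ℝ := 1 / (1 + t) with hs'_def
  have hs'pos : 0 < s' := by positivity
  have hs'le : s' ≤ 1 := by
    rw [hs'_def, div_le_one (by linarith)]; linarith
  have hwcomb : s' • w' + (1 - s') • z = w := by
    have h1 : s' • w' + (1 - s') • z = z + s' • (w' - z) := by module
    have h2 : w' - z = (1 + t) • u := by rw [hw'_def]; module
    rw [h1, h2, smul_smul]
    have : s' * (1 + t) = 1 := by
      rw [hs'_def]; field_simp
    rw [this, one_smul, hu_def]; abel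
  have hcv := hconv.2 (left_mem_segment ℝ w' z) (right_mem_segment ℝ w' z)
      hs'pos.le (by linarith : (0:ℝ) ≤ 1 - s') (by ring)
  rw [hwcomb] at hcv
  have hosc : f w' - f z ≤ m := hm _ hw'ball _ hzball
  have hs'bound : s' ≤ 2 * ‖u‖ / r := by
    rw [hs'_def, ht_def, div_le_div_iff₀ (by positivity) hr]
    have : (1 + r / (2 * ‖u‖)) * (2 * ‖u‖) = 2 * ‖u‖ + r := by
      field_simp
    nlinarith
  simp only [smul_eq_mul] at hcv
  have : f w - f z ≤ s' * (f w' - f z) := by nlinarith [hcv]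
  calc f w - f z ≤ s' * (f w' - f z) := this
    _ ≤ s' * m := by nlinarith
    _ ≤ (2 * ‖u‖ / r) * m := by nlinarith
    _ = 2 * m / r * ‖u‖ := by ring

/-- local Lipschitz estimate for D-convex functions, with constant
`(c₀/r) · osc(f, B(x₀,2r))` where `c₀` depends only on the norm and the cone `D`. -/
theorem dconvex_locally_lipschitz
    {V : Type*} [NormedAddCommGroup V] [NormedSpace ℝ V] [FiniteDimensional ℝ V]
    (D : Set V) (hDbal : ∀ (t : ℝ), ∀ x ∈ D, t • x ∈ D)
    (hDspan : Submodule.span ℝ D = ⊤) :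
    ∃ c₀ : ℝ, 0 < c₀ ∧
      ∀ (x₀ : V) (r : ℝ), 0 < r →
        ∀ f : V → ℝ, DConvexOn D (ball x₀ (2 * r)) f →
          ∀ m : ℝ, (∀ u ∈ ball x₀ (2 * r), ∀ v ∈ ball x₀ (2 * r), f u - f v ≤ m) →
            ∀ x ∈ ball x₀ r, ∀ y ∈ ball x₀ r,
              |f x - f y| ≤ c₀ / r * m * ‖x - y‖ := by
  classical
  obtain ⟨s, hsD, hspan, hli⟩ := exists_linearIndependent ℝ D
  haveI : Fintype s := (hli.setFinite).fintype
  let B : Module.Basis s ℝ V := Module.Basis.mk hli (by rw [Subtype.range_coe, hspan, hDspan])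
  have hB : ∀ i : s, (B i : V) ∈ D := by
    intro i
    have : B i = (i : V) := Module.Basis.mk_apply hli _ i
    rw [this]; exact hsD i.2
  let L : s → V →L[ℝ] ℝ := fun i => LinearMap.toContinuousLinearMap (B.coord i)
  set C : ℝ := 1 + ∑ i : s, ‖L i‖ * ‖(B i : V)‖ with hC_def
  have hCsum : 0 ≤ ∑ i : s, ‖L i‖ * ‖(B i : V)‖ :=
    Finset.sum_nonneg fun i _ => mul_nonneg (norm_nonneg _) (norm_nonneg _)
  have hC1 : 1 ≤ C := by rw [hC_def]; linarith
  have hC0 : 0 < C := by linarith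
  have hcoord : ∀ v : V, ∑ i : s, |B.repr v i| * ‖(B i : V)‖ ≤ C * ‖v‖ := by
    intro v
    have h1 : ∑ i : s, |B.repr v i| * ‖(B i : V)‖ ≤ ∑ i : s, (‖L i‖ * ‖(B i : V)‖) * ‖v‖ := by
      refine Finset.sum_le_sum fun i _ => ?_
      have : |B.repr v i| ≤ ‖L i‖ * ‖v‖ := by
        have := (L i).le_opNorm v
        simpa [L, Real.norm_eq_abs] using this
      nlinarith [norm_nonneg (B i : V), norm_nonneg v, (L i).opNorm_nonneg]
    calc _ ≤ ∑ i : s, (‖L i‖ * ‖(B i : V)‖) * ‖v‖ := h1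
      _ = (∑ i : s, ‖L i‖ * ‖(B i : V)‖) * ‖v‖ := by rw [Finset.sum_mul]
      _ ≤ C * ‖v‖ := by
          apply mul_le_mul_of_nonneg_right _ (norm_nonneg v)
          rw [hC_def]; linarith
  clear_value C
  refine ⟨2 * C, by linarith, ?_⟩
  intro x₀ r hr f hf m hm
  have hm0 : 0 ≤ m := by
    have := hm x₀ (mem_ball_self (by linarith)) x₀ (mem_ball_self (by linarith))
    linarith
  -- the "close points" estimate
  have hclose : ∀ z ∈ ball x₀ r, ∀ w ∈ ball x₀ r, ‖w - z‖ ≤ r / (2 * C) →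
      f w - f z ≤ 2 * C / r * m * ‖w - z‖ := by
    intro z hz w hw hwznorm
    set c : s → ℝ := fun i => B.repr (w - z) i with hc_def
    have hsum_all : ∑ i : s, |c i| * ‖(B i : V)‖ ≤ C * ‖w - z‖ := hcoord (w - z)
    have hsum_repr : ∑ i : s, c i • (B i : V) = w - z := B.sum_repr (w - z)
    clear_value c
    have hhalf : C * ‖w - z‖ ≤ r / 2 := by
      have h := mul_le_mul_of_nonneg_left hwznorm hC0.le
      have : C * (r / (2 * C)) = r / 2 := by field_simp
      linarith [this ▸ h]
    have hmem : ∀ tset : Finset s, z + ∑ i ∈ tset, c i • (B i : V) ∈ ball x₀ (3/2 * r) := by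
      intro tset
      have h1 : ‖∑ i ∈ tset, c i • (B i : V)‖ ≤ ∑ i ∈ tset, |c i| * ‖(B i : V)‖ := by
        calc ‖∑ i ∈ tset, c i • (B i : V)‖ ≤ ∑ i ∈ tset, ‖c i • (B i : V)‖ :=
              norm_sum_le _ _
          _ = ∑ i ∈ tset, |c i| * ‖(B i : V)‖ := by
              refine Finset.sum_congr rfl fun i _ => ?_
              rw [norm_smul, Real.norm_eq_abs]
      have h2 : ∑ i ∈ tset, |c i| * ‖(B i : V)‖ ≤ ∑ i : s, |c i| * ‖(B i : V)‖ :=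
        Finset.sum_le_sum_of_subset_of_nonneg (Finset.subset_univ _)
          (fun i _ _ => mul_nonneg (abs_nonneg _) (norm_nonneg _))
      rw [mem_ball] at hz ⊢
      have h3 : dist (z + ∑ i ∈ tset, c i • (B i : V)) x₀ ≤
          ‖∑ i ∈ tset, c i • (B i : V)‖ + dist z x₀ := by
        calc dist (z + ∑ i ∈ tset, c i • (B i : V)) x₀
            ≤ dist (z + ∑ i ∈ tset, c i • (B i : V)) z + dist z x₀ := dist_triangle _ _ _
          _ = ‖∑ i ∈ tset, c i • (B i : V)‖ + dist z x₀ := by rw [dist_self_add_left]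
      have h4 := hsum_all
      have h5 := hhalf
      linarith [h1, h2, h3, h4, h5, hz]
    have claim : ∀ tset : Finset s,
        f (z + ∑ i ∈ tset, c i • (B i : V)) - f z ≤
          2 * m / r * ∑ i ∈ tset, |c i| * ‖(B i : V)‖ := by
      intro tset
      induction tset using Finset.induction_on with
      | empty => simp
      | insert a tset ha ih =>
        rw [Finset.sum_insert ha, Finset.sum_insert ha]
        set p : V := z + ∑ i ∈ tset, c i • (B i : V) with hp_def
        have hq_eq : z + (c a • (B a : V) + ∑ i ∈ tset, c i • (B i : V)) =
            p + c a • (B a : V) := by rw [hp_def]; abel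
        rw [hq_eq]
        have hqmem : p + c a • (B a : V) ∈ ball x₀ (3/2 * r) := by
          rw [← hq_eq]
          have h := hmem (insert a tset)
          rwa [Finset.sum_insert ha] at h
        have hdirq : p + c a • (B a : V) - p ∈ D := by
          have h : p + c a • (B a : V) - p = c a • (B a : V) := by abel
          rw [h]; exact hDbal _ _ (hB a)
        have hstep := key_step D hDbal x₀ r hr f hf m hm0 hm p (p + c a • (B a : V))
          (hmem tset) hqmem hdirq
        have hnorm : ‖p + c a • (B a : V) - p‖ = |c a| * ‖(B a : V)‖ := by
          have h : p + c a • (B a : V) - p = c a • (B a : V) := by abel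
          rw [h, norm_smul, Real.norm_eq_abs]
        rw [hnorm] at hstep
        have h2mr : 0 ≤ 2 * m / r := by positivity
        nlinarith [hstep, ih]
    have hfinal := claim Finset.univ
    have hsum_eq : z + ∑ i : s, c i • (B i : V) = w := by
      rw [hsum_repr]; abel
    rw [hsum_eq] at hfinal
    have h2mr : 0 ≤ 2 * m / r := by positivity
    calc f w - f z ≤ 2 * m / r * ∑ i : s, |c i| * ‖(B i : V)‖ := hfinal
      _ ≤ 2 * m / r * (C * ‖w - z‖) := mul_le_mul_of_nonneg_left hsum_all h2mr
      _ = 2 * C / r * m * ‖w - z‖ := by ring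
  -- subdivision: the estimate for arbitrary points of the small ball
  have main : ∀ p ∈ ball x₀ r, ∀ q ∈ ball x₀ r,
      f q - f p ≤ 2 * C / r * m * ‖q - p‖ := by
    intro p hp q hq
    set v : V := q - p with hv_def
    set N : ℕ := ⌈2 * C * ‖v‖ / r⌉₊ + 1 with hN_def
    have hN0 : 0 < N := Nat.succ_pos _
    have hNR : 2 * C * ‖v‖ / r ≤ (N : ℝ) := by
      calc 2 * C * ‖v‖ / r ≤ (⌈2 * C * ‖v‖ / r⌉₊ : ℝ) := Nat.le_ceil _
        _ ≤ (N : ℝ) := by rw [hN_def]; push_cast; linarith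
    have hNpos : (0 : ℝ) < N := by exact_mod_cast hN0
    clear_value N
    have hstepnorm : ‖v‖ / N ≤ r / (2 * C) := by
      rw [div_le_div_iff₀ hNpos (by positivity)]
      have := (div_le_iff₀ hr).mp hNR
      nlinarith
    set P : ℕ → V := fun j => p + ((j : ℝ) / N) • v with hP_def
    have hP0 : P 0 = p := by simp [hP_def]
    have hPN : P N = q := by
      have : ((N : ℝ) / N) = 1 := div_self (ne_of_gt hNpos)
      simp [hP_def, this, hv_def]
    have hPmem : ∀ j : ℕ, j ≤ N → P j ∈ ball x₀ r := by
      intro j hj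
      have ha : (0 : ℝ) ≤ 1 - (j : ℝ) / N := by
        rw [sub_nonneg, div_le_one hNpos]
        exact_mod_cast hj
      have hb : (0 : ℝ) ≤ (j : ℝ) / N := by positivity
      have := (convex_ball x₀ r) hp hq ha hb (by ring)
      have heq : (1 - (j : ℝ) / N) • p + ((j : ℝ) / N) • q = P j := by
        rw [hP_def, hv_def]; module
      rwa [heq] at this
    have hstep : ∀ j : ℕ, j < N →
        f (P (j + 1)) - f (P j) ≤ 2 * C / r * m * (‖v‖ / N) := by
      intro j hj
      have hdiff : P (j + 1) - P j = ((1 : ℝ) / N) • v := by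
        have hs : (((j + 1 : ℕ)) : ℝ) / N = (j : ℝ) / N + 1 / N := by push_cast; ring
        simp only [hP_def, hs]
        module
      have hdn : ‖P (j + 1) - P j‖ = ‖v‖ / N := by
        rw [hdiff, norm_smul, Real.norm_eq_abs, abs_of_pos (by positivity : (0:ℝ) < 1 / N)]
        ring
      have := hclose (P j) (hPmem j hj.le) (P (j + 1)) (hPmem (j + 1) hj)
        (by rw [hdn]; exact hstepnorm)
      rwa [hdn] at this
    have htel : f q - f p = ∑ j ∈ Finset.range N, (f (P (j + 1)) - f (P j)) := by
      rw [Finset.sum_range_sub (fun j => f (P j)), hP0, hPN]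
    rw [htel]
    calc ∑ j ∈ Finset.range N, (f (P (j + 1)) - f (P j))
        ≤ ∑ j ∈ Finset.range N, 2 * C / r * m * (‖v‖ / N) :=
          Finset.sum_le_sum fun j hj => hstep j (Finset.mem_range.mp hj)
      _ = N * (2 * C / r * m * (‖v‖ / N)) := by
          rw [Finset.sum_const, Finset.card_range, nsmul_eq_mul]
      _ = 2 * C / r * m * ‖v‖ := by field_simp
  intro x hx y hy
  rw [abs_sub_le_iff]
  constructor
  · have := main y hy x hx
    linarith
  · have := main x hx y hy
    rw [norm_sub_rev] at this
    linarith
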